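/- Let λ be a singular cardinal. Then cf(𝔡_λ) > λ. -/

import Mathlib

open Cardinal

/-- `f ≤* g` in `μ^μ`: the set of counterexamples to domination has size `< μ`.
Here `μ` is represented by its canonical well-ordered type `μ.ord.ToType`. -/
def AlmostLE (μ : Cardinal) (f g : μ.ord.ToType → μ.ord.ToType) : Prop :=
  #↥{β : μ.ord.ToType | g β < f β} < μ

/-- The dominating number `𝔡_μ`: the minimal size of a family `D ⊆ μ^μ` such that
every `f ∈ μ^μ` is `≤*`-dominated by a member of `D`. -/
noncomputable def dNumber (μ : Cardinal) : Cardinal :=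
  sInf {c : Cardinal | ∃ D : Set (μ.ord.ToType → μ.ord.ToType),
    (∀ f : μ.ord.ToType → μ.ord.ToType, ∃ g ∈ D, AlmostLE μ f g) ∧ #↥D = c}

/-- Glue lemma: if `D` is dominating and is covered by pieces `Q i` indexed by
`i : lam.ord.ToType`, then some pulled-back piece (along the `i`-th block of a
pairing equivalence `P`) is itself dominating. -/
lemma glue_aux (lam : Cardinal)
    (P : lam.ord.ToType × lam.ord.ToType ≃ lam.ord.ToType)
    (D : Set (lam.ord.ToType → lam.ord.ToType))
    (hD : ∀ f, ∃ g ∈ D, AlmostLE lam f g)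
    (Q : lam.ord.ToType → Set (lam.ord.ToType → lam.ord.ToType))
    (hcover : ∀ g ∈ D, ∃ i, g ∈ Q i) :
    ∃ i, ∀ h : lam.ord.ToType → lam.ord.ToType,
      ∃ g ∈ Q i, #↥{β | g (P (i, β)) < h β} < lam := by
  by_contra hno
  push_neg at hno
  choose H hH using hno
  classical
  set f : lam.ord.ToType → lam.ord.ToType := fun t => H (P.symm t).1 (P.symm t).2 with hf
  obtain ⟨g, hgD, hle⟩ := hD f
  obtain ⟨i, hgQ⟩ := hcover g hgD
  have key : lam ≤ #↥{β | g (P (i, β)) < H i β} := hH i g hgQ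
  have hinj : Function.Injective (fun β => P (i, β)) := by
    intro a b hab
    have := P.injective hab
    simpa using this
  have hsub : (fun β => P (i, β)) '' {β | g (P (i, β)) < H i β} ⊆ {t | g t < f t} := by
    rintro t ⟨β, hβ, rfl⟩
    simpa [hf] using hβ
  have hge : lam ≤ #↥{t | g t < f t} :=
    calc lam ≤ #↥{β | g (P (i, β)) < H i β} := key
      _ = #↥((fun β => P (i, β)) '' {β | g (P (i, β)) < H i β}) :=
          (mk_image_eq hinj).symm
      _ ≤ #↥{t | g t < f t} := mk_le_mk_of_subset hsub
  exact absurd hle (not_lt.2 hge)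

/-- Every dominating family in `λ^λ` has size `> λ`. -/
lemma dom_large (lam : Cardinal) (hinf : ℵ₀ ≤ lam)
    (P : lam.ord.ToType × lam.ord.ToType ≃ lam.ord.ToType)
    (D : Set (lam.ord.ToType → lam.ord.ToType))
    (hD : ∀ f, ∃ g ∈ D, AlmostLE lam f g) :
    lam < #↥D := by
  classical
  have hT : #lam.ord.ToType = lam := mk_ord_toType lam
  have hne : Nonempty lam.ord.ToType := by
    rw [← mk_ne_zero_iff, hT]
    exact (aleph0_pos.trans_le hinf).ne'
  have : NoMaxOrder lam.ord.ToType := Cardinal.noMaxOrder hinf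
  by_contra hle
  push_neg at hle
  have hemb : Nonempty (↥D ↪ lam.ord.ToType) := by
    rw [← Cardinal.le_def, hT]; exact hle
  obtain ⟨j⟩ := hemb
  set Q : lam.ord.ToType → Set (lam.ord.ToType → lam.ord.ToType) :=
    fun i => {g | ∃ hg : g ∈ D, j ⟨g, hg⟩ = i} with hQ
  have hcover : ∀ g ∈ D, ∃ i, g ∈ Q i := fun g hg => ⟨j ⟨g, hg⟩, hg, rfl⟩
  obtain ⟨i, hi⟩ := glue_aux lam P D hD Q hcover
  obtain ⟨g₀, hg₀, -⟩ := hi (fun _ => Classical.arbitrary _)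
  set h : lam.ord.ToType → lam.ord.ToType :=
    fun β => (exists_gt (g₀ (P (i, β)))).choose with hh
  obtain ⟨g₁, hg₁, hlt⟩ := hi h
  have hgg : g₁ = g₀ := by
    obtain ⟨m₀, e₀⟩ := hg₀
    obtain ⟨m₁, e₁⟩ := hg₁
    have := j.injective (e₁.trans e₀.symm)
    exact congrArg Subtype.val this
  subst hgg
  have huniv : {β | g₁ (P (i, β)) < h β} = Set.univ := by
    ext β
    simpa [hh] using (exists_gt (g₁ (P (i, β)))).choose_spec
  rw [huniv] at hlt
  simp only [mk_univ, hT] at hlt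
  exact lt_irrefl _ hlt

/-- For every singular cardinal `λ`, `cf(𝔡_λ) > λ`. -/
theorem stmt15 (lam : Cardinal) (hinf : ℵ₀ ≤ lam) (hsing : lam.ord.cof < lam) :
    lam < (dNumber lam).ord.cof := by
  classical
  have hT : #lam.ord.ToType = lam := mk_ord_toType lam
  have hTT : #(lam.ord.ToType × lam.ord.ToType) = lam := by
    simp only [mk_prod, Cardinal.lift_id, hT]
    exact mul_eq_self hinf
  obtain ⟨P⟩ : Nonempty (lam.ord.ToType × lam.ord.ToType ≃ lam.ord.ToType) :=
    Cardinal.eq.1 (hTT.trans hT.symm)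
  -- the defining set is nonempty
  have hne : {c : Cardinal | ∃ D : Set (lam.ord.ToType → lam.ord.ToType),
      (∀ f : lam.ord.ToType → lam.ord.ToType, ∃ g ∈ D, AlmostLE lam f g) ∧ #↥D = c}.Nonempty := by
    refine ⟨_, Set.univ, fun f => ⟨f, Set.mem_univ f, ?_⟩, rfl⟩
    have : {β | f β < f β} = (∅ : Set lam.ord.ToType) := by ext β; simp
    unfold AlmostLE
    rw [this]
    simpa using lt_of_lt_of_le aleph0_pos hinf
  have hdef : dNumber lam = sInf {c : Cardinal | ∃ D : Set (lam.ord.ToType → lam.ord.ToType),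
      (∀ f : lam.ord.ToType → lam.ord.ToType, ∃ g ∈ D, AlmostLE lam f g) ∧ #↥D = c} := rfl
  have hmem := csInf_mem hne
  rw [← hdef] at hmem
  obtain ⟨D, hDdom, hDcard⟩ := hmem
  have hlarge : lam < dNumber lam := hDcard ▸ dom_large lam hinf P D hDdom
  have hdinf : ℵ₀ ≤ dNumber lam := hinf.trans hlarge.le
  by_contra hcof
  push_neg at hcof
  -- an unbounded subset of (dNumber lam).ord.ToType of size cof ≤ lam
  obtain ⟨S, hSunb, hScard⟩ :=
    Ordinal.cof_eq (dNumber lam).ord.ToType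
  rw [Ordinal.cof_toType] at hScard
  -- enumeration of D by (dNumber lam).ord.ToType
  obtain ⟨e⟩ : Nonempty ((dNumber lam).ord.ToType ≃ ↥D) :=
    Cardinal.eq.1 (by rw [mk_ord_toType, hDcard])
  -- embed S into lam.ord.ToType
  have hSle : #↥S ≤ #lam.ord.ToType := by rw [hT, hScard]; exact hcof
  obtain ⟨ι⟩ := (Cardinal.le_def _ _).1 hSle
  set Q : lam.ord.ToType → Set (lam.ord.ToType → lam.ord.ToType) :=
    fun i => {g | ∃ x : ↥S, ι x = i ∧ ∃ y, y ≤ (x : (dNumber lam).ord.ToType) ∧ (e y : _) = g}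
    with hQ
  have hcover : ∀ g ∈ D, ∃ i, g ∈ Q i := by
    intro g hg
    obtain ⟨x, hxS, hxy⟩ := hSunb (e.symm ⟨g, hg⟩)
    refine ⟨ι ⟨x, hxS⟩, ⟨x, hxS⟩, rfl, e.symm ⟨g, hg⟩, hxy, by simp⟩
  obtain ⟨i, hi⟩ := glue_aux lam P D hDdom Q hcover
  -- Q i is nonempty, pick x₀
  have hTne : Nonempty lam.ord.ToType := by
    rw [← mk_ne_zero_iff, hT]
    exact (aleph0_pos.trans_le hinf).ne'
  obtain ⟨g₀, hg₀, -⟩ := hi (fun _ => Classical.arbitrary _)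
  obtain ⟨x₀, hx₀, -⟩ := hg₀
  -- Q i has size < dNumber lam
  have hQsub : Q i ⊆ (fun y => (e y : lam.ord.ToType → lam.ord.ToType)) ''
      (Set.Iic (x₀ : (dNumber lam).ord.ToType)) := by
    rintro g ⟨x, hxi, y, hyx, hyg⟩
    have hxx : x = x₀ := ι.injective (hxi.trans hx₀.symm)
    exact ⟨y, by rw [← hxx]; exact hyx, hyg⟩
  have hIic : #↥(Set.Iic (x₀ : (dNumber lam).ord.ToType)) < dNumber lam := by
    have h1 : Set.Iic (x₀ : (dNumber lam).ord.ToType) =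
        Set.Iio (x₀ : (dNumber lam).ord.ToType) ∪ {(x₀ : (dNumber lam).ord.ToType)} := by
      rw [Set.Iio_union_right]
    rw [h1]
    refine lt_of_le_of_lt (mk_union_le _ _) ?_
    refine Cardinal.add_lt_of_lt hdinf (mk_Iio_ord_toType _) ?_
    simpa using one_lt_aleph0.trans_le hdinf
  have hQcard : #↥(Q i) < dNumber lam :=
    lt_of_le_of_lt (le_trans (mk_le_mk_of_subset hQsub) (mk_image_le)) hIic
  -- pulled-back family is dominating of size < dNumber lam : contradiction
  set R : Set (lam.ord.ToType → lam.ord.ToType) :=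
    (fun g => g ∘ fun β => P (i, β)) '' (Q i) with hR
  have hRdom : ∀ f, ∃ g ∈ R, AlmostLE lam f g := by
    intro f
    obtain ⟨g, hgQ, hlt⟩ := hi f
    exact ⟨g ∘ fun β => P (i, β), ⟨g, hgQ, rfl⟩, hlt⟩
  have hdle : dNumber lam ≤ #↥R := by
    rw [hdef]
    exact csInf_le' ⟨R, hRdom, rfl⟩
  have hRcard : #↥R < dNumber lam := lt_of_le_of_lt mk_image_le hQcard
  exact absurd hdle (not_le.2 hRcard)
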